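/- If L and K are semimodular lattices of the same finite length and L is a meet-subsemilattice of K (containing more than one element and closed under the binary meet of K, with the order on L induced from K making L a lattice), then L is a sublattice of K, i.e., L is also closed under the binary join of K. -/

import Mathlib

open Order

section Aux

variable {α : Type*} [PartialOrder α]

/-- Series of covering relations. -/
abbrev CovSeries (α : Type*) [PartialOrder α] : Type _ := RelSeries {(a, b) : α × α | a ⋖ b}

/-- Reinterpret a covering series as an `LTSeries`. -/
def CovSeries.toLT (p : CovSeries α) : LTSeries α :=
  ⟨p.length, p.toFun, fun i => (p.step i).lt⟩

@[simp] lemma CovSeries.toLT_length (p : CovSeries α) : p.toLT.length = p.length := rfl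
@[simp] lemma CovSeries.toLT_head (p : CovSeries α) : p.toLT.head = p.head := rfl
@[simp] lemma CovSeries.toLT_last (p : CovSeries α) : p.toLT.last = p.last := rfl

lemma CovSeries.head_eq_last_of_length_eq_zero (p : CovSeries α) (h : p.length = 0) :
    p.head = p.last := by
  show p.toFun 0 = p.toFun (Fin.last _)
  congr 1
  apply Fin.ext
  simp [h]

lemma CovSeries.head_lt_last (p : CovSeries α) (h : p.length ≠ 0) : p.head < p.last := by
  have : p.toLT 0 < p.toLT (Fin.last _) := by
    apply p.toLT.strictMono
    simp only [Fin.lt_def, Fin.val_last]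
    simpa using Nat.pos_of_ne_zero h
  exact this

lemma CovSeries.head_le_last (p : CovSeries α) : p.head ≤ p.last := by
  rcases eq_or_ne p.length 0 with h | h
  · exact (p.head_eq_last_of_length_eq_zero h).le
  · exact (p.head_lt_last h).le

variable [Fintype α]

lemma height_ne_top' (a : α) : Order.height a ≠ ⊤ := by
  have h : Order.height a ≤ (Fintype.card α : ℕ∞) := by
    apply Order.height_le
    intro p _
    exact_mod_cast p.length_lt_card.le
  exact ne_top_of_le_ne_top (by simp) h

lemma exists_nat_height (a : α) : ∃ k : ℕ, Order.height a = k := by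
  lift Order.height a to ℕ using height_ne_top' a with k hk
  exact ⟨k, rfl⟩

lemma toNat_height_lt {a b : α} (h : a < b) :
    (Order.height a).toNat < (Order.height b).toNat := by
  have h1 : Order.height a < Order.height b :=
    Order.height_strictMono h (lt_top_iff_ne_top.2 (height_ne_top' a))
  obtain ⟨A, hA⟩ := exists_nat_height a
  obtain ⟨B, hB⟩ := exists_nat_height b
  rw [hA, hB] at h1 ⊢
  exact_mod_cast h1

lemma exists_covSeries_aux :
    ∀ (k : ℕ) (u v : α), u ≤ v → (Order.height v).toNat ≤ (Order.height u).toNat + k →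
      ∃ p : CovSeries α, p.head = u ∧ p.last = v := by
  intro k
  induction k with
  | zero =>
    intro u v huv hk
    rcases huv.lt_or_eq with hlt | rfl
    · exact absurd (toNat_height_lt hlt) (by omega)
    · exact ⟨RelSeries.singleton _ u, rfl, rfl⟩
  | succ k ih =>
    intro u v huv hk
    rcases huv.lt_or_eq with hlt | rfl
    · obtain ⟨u', _, hmin⟩ :=
        exists_minimal_le_of_wellFoundedLT (P := fun z => u < z ∧ z ≤ v) (a := v) ⟨hlt, le_refl v⟩
      obtain ⟨⟨hu1, hu2⟩, hmin2⟩ := hmin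
      have hcov : u ⋖ u' := by
        refine ⟨hu1, fun z hz hz' => ?_⟩
        exact absurd (hmin2 ⟨hz, hz'.le.trans hu2⟩ hz'.le) hz'.not_ge
      obtain ⟨p, hp1, hp2⟩ := ih u' v hu2 (by have := toNat_height_lt hu1; omega)
      refine ⟨p.cons u (by rw [hp1]; exact hcov), ?_, ?_⟩
      · simp
      · simp [hp2]
    · exact ⟨RelSeries.singleton _ u, rfl, rfl⟩

lemma exists_covSeries {u v : α} (huv : u ≤ v) :
    ∃ p : CovSeries α, p.head = u ∧ p.last = v :=
  exists_covSeries_aux (Order.height v).toNat u v huv (by omega)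

lemma exists_covSeries_of_ltSeries (p : LTSeries α) :
    ∃ q : CovSeries α, q.head = p.head ∧ q.last = p.last ∧ p.length ≤ q.length := by
  suffices h : ∀ (n : ℕ) (p : LTSeries α), p.length = n →
      ∃ q : CovSeries α, q.head = p.head ∧ q.last = p.last ∧ p.length ≤ q.length from
    h p.length p rfl
  intro n
  induction n with
  | zero =>
    intro p hn
    refine ⟨RelSeries.singleton _ p.head, by simp, ?_, by simp [hn]⟩
    have : p.head = p.last := by
      show p.toFun 0 = p.toFun (Fin.last _)
      congr 1
      apply Fin.ext
      simp [hn]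
    simp [← this]
  | succ n ih =>
    intro p hn
    have hlen : p.eraseLast.length = n := by simp [RelSeries.eraseLast, hn]
    obtain ⟨q', h1, h2, h3⟩ := ih p.eraseLast hlen
    have hstep : p.eraseLast.last < p.last := p.eraseLast_last_rel_last (by omega)
    obtain ⟨c, hc1, hc2⟩ := exists_covSeries hstep.le
    have hcz : c.length ≠ 0 := by
      intro h0
      have h' := c.head_eq_last_of_length_eq_zero h0
      rw [hc1, hc2] at h'
      exact hstep.ne h'
    refine ⟨q'.smash c (by rw [h2, hc1]), ?_, ?_, ?_⟩
    · rw [RelSeries.head_smash, h1, RelSeries.head_eraseLast]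
    · rw [RelSeries.last_smash, hc2]
    · have hsl : (q'.smash c (by rw [h2, hc1])).length = q'.length + c.length := rfl
      omega

lemma CovSeries.head_covby_tail_head (p : CovSeries α) (h : p.length ≠ 0) :
    p.head ⋖ (p.tail h).head := by
  rw [RelSeries.head_tail]
  have hs := p.step ⟨0, Nat.pos_of_ne_zero h⟩
  have e1 : (⟨0, Nat.pos_of_ne_zero h⟩ : Fin p.length).castSucc = (0 : Fin (p.length + 1)) :=
    Fin.ext (by simp)
  have e2 : (⟨0, Nat.pos_of_ne_zero h⟩ : Fin p.length).succ = (1 : Fin (p.length + 1)) := by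
    apply Fin.ext
    have hpos := Nat.pos_of_ne_zero h
    rw [Fin.val_succ, Fin.val_one', Nat.mod_eq_of_lt (by omega)]
  rwa [e1, e2] at hs

lemma jh_aux (hdia : ∀ u x y v : α, u ⋖ x → u ⋖ y → x ≠ y → x ≤ v → y ≤ v →
      ∃ z, x ⋖ z ∧ y ⋖ z ∧ z ≤ v) :
    ∀ (n : ℕ) (p q : CovSeries α), p.head = q.head → p.last = q.last →
      p.length = n → q.length = n := by
  intro n
  induction n using Nat.strong_induction_on with
  | _ n ih =>
  intro p q hh hl hp
  match n, hp with
  | 0, hp =>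
    by_contra hq0
    have h1 := q.head_lt_last hq0
    rw [← hh, ← hl, p.head_eq_last_of_length_eq_zero hp] at h1
    exact lt_irrefl _ h1
  | (n+1), hp =>
    have hp0 : p.length ≠ 0 := by omega
    have hq0 : q.length ≠ 0 := by
      intro h0
      have h' := q.head_eq_last_of_length_eq_zero h0
      rw [← hh, ← hl] at h'
      exact (p.head_lt_last hp0).ne h'
    set pt := p.tail hp0 with hpt
    set qt := q.tail hq0 with hqt
    have hptlen : pt.length = n := by simp [pt, RelSeries.tail]; omega
    have hqtlen : qt.length = q.length - 1 := by simp [qt, RelSeries.tail]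
    have hptlast : pt.last = p.last := p.last_tail hp0
    have hqtlast : qt.last = q.last := q.last_tail hq0
    have hx : p.head ⋖ pt.head := by
      rw [hpt]; exact CovSeries.head_covby_tail_head p hp0
    have hy : p.head ⋖ qt.head := by
      rw [hh, hqt]; exact CovSeries.head_covby_tail_head q hq0
    by_cases hxy : pt.head = qt.head
    · have := ih n (by omega) pt qt hxy (by rw [hptlast, hqtlast, hl]) hptlen
      omega
    · have hxle : pt.head ≤ p.last := by
        rw [← hptlast]; exact CovSeries.head_le_last pt
      have hyle : qt.head ≤ p.last := by
        rw [hl, ← hqtlast]; exact CovSeries.head_le_last qt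
      obtain ⟨z, hz1, hz2, hz3⟩ := hdia p.head pt.head qt.head p.last hx hy hxy hxle hyle
      obtain ⟨c, hc1, hc2⟩ := exists_covSeries hz3
      have hA := ih n (by omega) pt (c.cons pt.head (by rw [hc1]; exact hz1)) (by simp)
        (by rw [hptlast, RelSeries.last_cons, hc2]) hptlen
      simp only [RelSeries.cons_length] at hA
      have hB := ih n (by omega) (c.cons qt.head (by rw [hc1]; exact hz2)) qt (by simp)
        (by rw [hqtlast, RelSeries.last_cons, hc2, hl]) (by simp only [RelSeries.cons_length]; omega)
      omega

lemma cov_grade (hdia : ∀ u x y v : α, u ⋖ x → u ⋖ y → x ≠ y → x ≤ v → y ≤ v →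
      ∃ z, x ⋖ z ∧ y ⋖ z ∧ z ≤ v)
    (b0 : α) (hb0 : ∀ x, b0 ≤ x) {a b : α} (hab : a ⋖ b) :
    Order.height b = Order.height a + 1 := by
  obtain ⟨N, hN⟩ := exists_nat_height b
  obtain ⟨p, hp1, hp2⟩ := Order.exists_series_of_height_eq_coe b hN
  obtain ⟨q, hq1, hq2, hq3⟩ := exists_covSeries_of_ltSeries p
  obtain ⟨c0, hc01, hc02⟩ := exists_covSeries (hb0 q.head)
  have hconn : c0.last = q.head := hc02
  have hQlast : (c0.smash q hconn).last = b := by rw [RelSeries.last_smash, hq2, hp1]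
  have hQlen : (c0.smash q hconn).length ≤ N := by
    have h' := Order.length_le_height_last (p := CovSeries.toLT (c0.smash q hconn))
    rw [CovSeries.toLT_last, hQlast, hN] at h'
    exact_mod_cast h'
  have hQlen2 : (c0.smash q hconn).length = c0.length + q.length := rfl
  obtain ⟨c1, hc11, hc12⟩ := exists_covSeries (hb0 a)
  have hR := jh_aux hdia N (c0.smash q hconn) (c1.snoc b (by rw [hc12]; exact hab))
    (by rw [RelSeries.head_smash, hc01, RelSeries.head_snoc, hc11])
    (by rw [hQlast, RelSeries.last_snoc]) (by omega)
  simp only [RelSeries.snoc_length] at hR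
  have hc1len : (c1.length : ℕ∞) ≤ Order.height a := by
    have h' := Order.length_le_height_last (p := CovSeries.toLT c1)
    rwa [CovSeries.toLT_last, hc12] at h'
  obtain ⟨M, hM⟩ := exists_nat_height a
  have hMN : M < N := by
    have := toNat_height_lt hab.lt
    rw [hM, hN] at this
    simpa using this
  have hc1M : c1.length ≤ M := by
    rw [hM] at hc1len
    exact_mod_cast hc1len
  rw [hM, hN]
  have : N = M + 1 := by omega
  rw [this]
  push_cast
  ring

lemma covSeries_height (hg : ∀ a b : α, a ⋖ b → Order.height b = Order.height a + 1) :
    ∀ (n : ℕ) (c : CovSeries α), c.length = n →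
      Order.height c.last = Order.height c.head + n := by
  intro n
  induction n with
  | zero => intro c hc; rw [← c.head_eq_last_of_length_eq_zero hc]; simp
  | succ n ih =>
    intro c hc
    have h1 : c.eraseLast.length = n := by simp [RelSeries.eraseLast]; omega
    have h2 := hg _ _ (c.eraseLast_last_rel_last (by omega))
    rw [h2, ih c.eraseLast h1, RelSeries.head_eraseLast]
    push_cast
    ring

lemma height_add_coheight (hg : ∀ a b : α, a ⋖ b → Order.height b = Order.height a + 1)
    (t0 : α) (ht0 : ∀ x, x ≤ t0) (a : α) :
    Order.height a + Order.coheight a = Order.height t0 := by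
  obtain ⟨c, hc1, hc2⟩ := exists_covSeries (ht0 a)
  have hh : Order.height t0 = Order.height a + c.length := by
    rw [← hc2, covSeries_height hg c.length c rfl, hc1]
  have hco : Order.coheight a = c.length := by
    apply le_antisymm
    · apply Order.coheight_le
      intro p hp
      obtain ⟨M, hM⟩ := exists_nat_height a
      obtain ⟨P, hP⟩ := exists_nat_height p.last
      obtain ⟨r, hr1, hr2⟩ := Order.exists_series_of_height_eq_coe a hM
      have hS := Order.length_le_height_last (p := r.smash p (by rw [hr1, hp]))
      have hSlast : (r.smash p (by rw [hr1, hp])).last = p.last := by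
        rw [RelSeries.last_smash]
      rw [hSlast, hP] at hS
      have hS2 : (r.smash p (by rw [hr1, hp])).length ≤ P := by exact_mod_cast hS
      have hS3 : (r.smash p (by rw [hr1, hp])).length = r.length + p.length := rfl
      have hple : Order.height p.last ≤ Order.height t0 := Order.height_mono (ht0 _)
      rw [hh, hM, hP] at hple
      have hple2 : P ≤ M + c.length := by exact_mod_cast hple
      exact_mod_cast (by omega : p.length ≤ c.length)
    · have h' := Order.length_le_coheight_head (p := c.toLT)
      rwa [CovSeries.toLT_head, hc1] at h'
  rw [hco, hh]

lemma eq_of_le_of_height_eq {a b : α} (hle : a ≤ b)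
    (h : Order.height a = Order.height b) : a = b := by
  rcases hle.lt_or_eq with hlt | rfl
  · exact absurd (toNat_height_lt hlt) (by rw [h]; omega)
  · rfl

lemma covBy_of_lt_of_height_le {a b : α} (hlt : a < b)
    (h : Order.height b ≤ Order.height a + 1) : a ⋖ b := by
  refine ⟨hlt, fun z hz1 hz2 => ?_⟩
  have h1 := toNat_height_lt hz1
  have h2 := toNat_height_lt hz2
  obtain ⟨A, hA⟩ := exists_nat_height a
  obtain ⟨B, hB⟩ := exists_nat_height b
  obtain ⟨C, hC⟩ := exists_nat_height z
  rw [hA, hB] at h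
  rw [hA, hC] at h1
  rw [hC, hB] at h2
  simp only [ENat.toNat_coe] at h1 h2
  have : B ≤ A + 1 := by exact_mod_cast h
  omega

lemma exists_ltSeries_length_eq_krullDim [Nonempty α] :
    ∃ p : LTSeries α, Order.krullDim α = p.length := by
  obtain ⟨b, -, hb⟩ := Finset.exists_max_image Finset.univ
    (fun a : α => (Order.height a).toNat) ⟨Classical.arbitrary α, Finset.mem_univ _⟩
  obtain ⟨N, hN⟩ := exists_nat_height b
  obtain ⟨p, hp1, hp2⟩ := Order.exists_series_of_height_eq_coe b hN
  refine ⟨p, ?_⟩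
  rw [Order.krullDim_eq_iSup_height_of_nonempty, hp2]
  congr 1
  apply le_antisymm
  · apply iSup_le
    intro a
    obtain ⟨M, hM⟩ := exists_nat_height a
    have := hb a (Finset.mem_univ a)
    rw [hM, hN] at this
    rw [hM]
    simp only [ENat.toNat_coe] at this
    exact_mod_cast this
  · rw [← hN]
    exact le_iSup (fun a => Order.height a) b

end Aux


/-- A lattice is (upper) semimodular if `x ⊓ y ⋖ x` implies `y ⋖ x ⊔ y`. -/
def Semimodular (L : Type*) [Lattice L] : Prop :=
  ∀ x y : L, x ⊓ y ⋖ x → y ⋖ x ⊔ y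

/-- `b` covers `a` within the subposet `s`. -/
def CovIn {K : Type*} [PartialOrder K] (s : Set K) (a b : K) : Prop :=
  a < b ∧ ∀ z ∈ s, ¬(a < z ∧ z < b)

/-- `j` is the least upper bound of `x` and `y` within the subposet `s`. -/
def IsLUBIn {K : Type*} [PartialOrder K] (s : Set K) (x y j : K) : Prop :=
  j ∈ s ∧ x ≤ j ∧ y ≤ j ∧ ∀ z ∈ s, x ≤ z → y ≤ z → j ≤ z

/-- Wild's lemma: if `L` and `K` are semimodular lattices of the same finite length
and `L` is a meet-subsemilattice of `K` (with more than one element, and a lattice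
in the induced order), then `L` is a sublattice of `K`: it is closed under the join
of `K`. -/
theorem meet_subsemilattice_is_sublattice (K : Type*) [CompleteLattice K] [Fintype K]
    (hK : Semimodular K) (s : Set K)
    (hcard : 1 < s.ncard)
    -- `s` is a meet-subsemilattice of `K`
    (hmeet : ∀ x ∈ s, ∀ y ∈ s, x ⊓ y ∈ s)
    -- with the induced order, `s` is a lattice: binary joins exist within `s`
    (hjoin : ∀ x ∈ s, ∀ y ∈ s, ∃ j, IsLUBIn s x y j)
    -- `s` (as a lattice in its own right) is semimodular
    (hsemi : ∀ x ∈ s, ∀ y ∈ s, ∀ j, IsLUBIn s x y j →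
        CovIn s (x ⊓ y) x → CovIn s y j)
    -- `s` and `K` have the same length
    (hlen : Order.krullDim s = Order.krullDim K) :
    ∀ x ∈ s, ∀ y ∈ s, x ⊔ y ∈ s := by
  classical
  have hsne : s.Nonempty := by
    rcases Set.eq_empty_or_nonempty s with rfl | h
    · simp at hcard
    · exact h
  haveI : Fintype ↥s := Fintype.ofFinite ↥s
  haveI : Nonempty ↥s := hsne.to_subtype
  have hcovIn : ∀ a b : ↥s, (a ⋖ b) ↔ CovIn s a.1 b.1 := by
    intro a b
    constructor
    · intro h
      refine ⟨Subtype.coe_lt_coe.mpr h.1, fun z hz hcon => ?_⟩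
      exact h.2 (show a < ⟨z, hz⟩ from Subtype.coe_lt_coe.mp hcon.1)
        (show (⟨z, hz⟩ : ↥s) < b from Subtype.coe_lt_coe.mp hcon.2)
    · intro h
      refine ⟨Subtype.coe_lt_coe.mp h.1, fun z hz1 hz2 => ?_⟩
      exact h.2 z.1 z.2 ⟨Subtype.coe_lt_coe.mpr hz1, Subtype.coe_lt_coe.mpr hz2⟩
  have inf_eq_of_covs : ∀ {u x y : K}, u ⋖ x → u ⋖ y → x ≠ y → x ⊓ y = u := by
    intro u x y hux huy hxy
    have h1 : u ≤ x ⊓ y := le_inf hux.1.le huy.1.le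
    rcases h1.lt_or_eq with h | h
    · exfalso
      rcases (inf_le_left : x ⊓ y ≤ x).lt_or_eq with h2 | h2
      · exact hux.2 h h2
      · have hxy' : x ≤ y := h2 ▸ inf_le_right
        rcases hxy'.lt_or_eq with h3 | h3
        · exact huy.2 hux.1 h3
        · exact hxy h3
    · exact h.symm
  have hdiaK : ∀ u x y v : K, u ⋖ x → u ⋖ y → x ≠ y → x ≤ v → y ≤ v →
      ∃ z, x ⋖ z ∧ y ⋖ z ∧ z ≤ v := by
    intro u x y v hux huy hxy hxv hyv
    have hm := inf_eq_of_covs hux huy hxy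
    have hm' : y ⊓ x = u := by rw [inf_comm]; exact hm
    refine ⟨x ⊔ y, ?_, ?_, sup_le hxv hyv⟩
    · have h' := hK y x (by rw [hm']; exact huy)
      rwa [sup_comm y x] at h'
    · exact hK x y (by rw [hm]; exact hux)
  have hdias : ∀ u x y v : ↥s, u ⋖ x → u ⋖ y → x ≠ y → x ≤ v → y ≤ v →
      ∃ z, x ⋖ z ∧ y ⋖ z ∧ z ≤ v := by
    intro u x y v hux huy hxy hxv hyv
    have hm : x.1 ⊓ y.1 = u.1 := by
      have h1 : u.1 ≤ x.1 ⊓ y.1 :=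
        le_inf (Subtype.coe_lt_coe.mpr hux.1).le (Subtype.coe_lt_coe.mpr huy.1).le
      rcases h1.lt_or_eq with h | h
      · exfalso
        have hmem : x.1 ⊓ y.1 ∈ s := hmeet _ x.2 _ y.2
        rcases (inf_le_left : x.1 ⊓ y.1 ≤ x.1).lt_or_eq with h2 | h2
        · exact hux.2 (show u < ⟨_, hmem⟩ from Subtype.coe_lt_coe.mp h)
            (show (⟨_, hmem⟩ : ↥s) < x from Subtype.coe_lt_coe.mp h2)
        · have hxy' : x.1 ≤ y.1 := h2 ▸ inf_le_right
          rcases hxy'.lt_or_eq with h3 | h3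
          · exact huy.2 hux.1 (Subtype.coe_lt_coe.mp h3)
          · exact hxy (Subtype.coe_injective h3)
      · exact h.symm
    obtain ⟨j, hj⟩ := hjoin x.1 x.2 y.1 y.2
    have hj' : IsLUBIn s y.1 x.1 j :=
      ⟨hj.1, hj.2.2.1, hj.2.1, fun z hz h1 h2 => hj.2.2.2 z hz h2 h1⟩
    have hcx : CovIn s (x.1 ⊓ y.1) x.1 := by rw [hm]; exact (hcovIn u x).1 hux
    have hcy : CovIn s (y.1 ⊓ x.1) y.1 := by
      rw [inf_comm, hm]; exact (hcovIn u y).1 huy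
    have h1 := hsemi x.1 x.2 y.1 y.2 j hj hcx
    have h2 := hsemi y.1 y.2 x.1 x.2 j hj' hcy
    refine ⟨⟨j, hj.1⟩, ?_, ?_, ?_⟩
    · exact (hcovIn x ⟨j, hj.1⟩).2 h2
    · exact (hcovIn y ⟨j, hj.1⟩).2 h1
    · exact Subtype.coe_le_coe.mp (hj.2.2.2 v.1 v.2
        (Subtype.coe_le_coe.mpr hxv) (Subtype.coe_le_coe.mpr hyv))
  have gK : ∀ a b : K, a ⋖ b → Order.height b = Order.height a + 1 :=
    fun a b hab => cov_grade hdiaK ⊥ (fun x => bot_le) hab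
  obtain ⟨n, hn⟩ := exists_nat_height (⊤ : K)
  obtain ⟨p, hp⟩ := exists_ltSeries_length_eq_krullDim (α := ↥s)
  have hplen : p.length = n := by
    rw [hlen, ← Order.height_top_eq_krullDim, hn] at hp
    exact_mod_cast hp.symm
  set q : LTSeries K := p.map Subtype.val (fun a b h => Subtype.coe_lt_coe.mpr h) with hqdef
  have hqlen : q.length = n := hplen
  have hqlast : q.last = (p.last).1 := LTSeries.last_map _ _ _
  have hqhead : q.head = (p.head).1 := LTSeries.head_map _ _ _
  have htopmem : (⊤ : K) ∈ s := by
    have hq : q.last = ⊤ := by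
      by_contra hne
      have hlt : q.last < ⊤ := Ne.lt_top hne
      have h' := Order.length_le_height_last (p := q.snoc ⊤ hlt)
      rw [RelSeries.last_snoc, hn] at h'
      simp only [RelSeries.snoc_length] at h'
      have : q.length + 1 ≤ n := by exact_mod_cast h'
      omega
    rw [hqlast] at hq
    rw [← hq]
    exact (p.last).2
  have hbotmem : (⊥ : K) ∈ s := by
    have hq : q.head = ⊥ := by
      by_contra hne
      have hlt : (⊥ : K) < q.head := Ne.bot_lt hne
      have h' := Order.length_le_height_last (p := q.cons ⊥ hlt)
      rw [RelSeries.last_cons] at h'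
      have h2 : Order.height q.last ≤ Order.height (⊤ : K) := Order.height_mono le_top
      rw [hn] at h2
      simp only [RelSeries.cons_length] at h'
      obtain ⟨L, hL⟩ := exists_nat_height q.last
      rw [hL] at h' h2
      have e1 : q.length + 1 ≤ L := by exact_mod_cast h'
      have e2 : L ≤ n := by exact_mod_cast h2
      omega
    rw [hqhead] at hq
    rw [← hq]
    exact (p.head).2
  have g_s : ∀ a b : ↥s, a ⋖ b → Order.height b = Order.height a + 1 :=
    fun a b hab => cov_grade hdias ⟨⊥, hbotmem⟩
      (fun x => Subtype.coe_le_coe.mp bot_le) hab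
  set ts : ↥s := ⟨⊤, htopmem⟩ with htsdef
  have hts_top : ∀ x : ↥s, x ≤ ts := fun x => Subtype.coe_le_coe.mp le_top
  have hhts : Order.height ts = (n : ℕ∞) := by
    apply le_antisymm
    · apply Order.height_le
      intro r _
      have h1 : (r.length : WithBot ℕ∞) ≤ Order.krullDim ↥s := LTSeries.length_le_krullDim r
      rw [hlen, ← Order.height_top_eq_krullDim, hn] at h1
      exact_mod_cast h1
    · calc (n : ℕ∞) = (p.length : ℕ∞) := by rw [hplen]
        _ ≤ Order.height p.last := Order.length_le_height_last
        _ ≤ Order.height ts := Order.height_mono (hts_top _)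
  have hsumK : ∀ x : K, Order.height x + Order.coheight x = (n : ℕ∞) := by
    intro x; rw [height_add_coheight gK ⊤ (fun _ => le_top) x, hn]
  have hsumS : ∀ a : ↥s, Order.height a + Order.coheight a = (n : ℕ∞) := by
    intro a; rw [height_add_coheight g_s ts hts_top a, hhts]
  have heq : ∀ a : ↥s, Order.height a = Order.height a.1 := by
    intro a
    have hle1 : Order.height a ≤ Order.height a.1 :=
      Order.height_le_height_apply_of_strictMono (Subtype.val : ↥s → K)
        (fun _ _ h => Subtype.coe_lt_coe.mpr h) a
    have hle2 : Order.coheight a ≤ Order.coheight a.1 :=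
      Order.coheight_le_coheight_apply_of_strictMono (Subtype.val : ↥s → K)
        (fun _ _ h => Subtype.coe_lt_coe.mpr h) a
    obtain ⟨A, hA⟩ := exists_nat_height a
    obtain ⟨B, hB⟩ := exists_nat_height a.1
    have h1 := hsumS a
    have h2 := hsumK a.1
    have hcofin1 : Order.coheight a ≠ ⊤ := by
      intro h; rw [h, hA] at h1; simp at h1
    have hcofin2 : Order.coheight a.1 ≠ ⊤ := by
      intro h; rw [h, hB] at h2; simp at h2
    lift Order.coheight a to ℕ using hcofin1 with C hC
    lift Order.coheight a.1 to ℕ using hcofin2 with D hD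
    rw [hA] at h1 hle1
    rw [hB] at h2 hle1
    rw [hA, hB]
    have e1 : A + C = n := by exact_mod_cast h1
    have e2 : B + D = n := by exact_mod_cast h2
    have e3 : A ≤ B := by exact_mod_cast hle1
    have e4 : C ≤ D := by exact_mod_cast hle2
    exact_mod_cast (by omega : A = B)
  have hct : ∀ a b : ↥s, a ⋖ b → a.1 ⋖ b.1 := by
    intro a b hab
    have h1 : Order.height b.1 = Order.height a.1 + 1 := by
      rw [← heq a, ← heq b]; exact g_s a b hab
    exact covBy_of_lt_of_height_le (Subtype.coe_lt_coe.mpr hab.1) h1.le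
  have hbase : ∀ c ∈ s, ∀ y ∈ s, CovIn s (c ⊓ y) c → c ⊔ y ∈ s := by
    intro c hc y hy hcov
    have hcmem : c ⊓ y ∈ s := hmeet _ hc _ hy
    have hcovs : (⟨c ⊓ y, hcmem⟩ : ↥s) ⋖ ⟨c, hc⟩ := (hcovIn _ _).2 hcov
    have hK1 : c ⊓ y ⋖ c := hct _ _ hcovs
    have hK2 : y ⋖ c ⊔ y := hK c y hK1
    obtain ⟨j, hj⟩ := hjoin c hc y hy
    have hcovyj : CovIn s y j := hsemi c hc y hy j hj hcov
    have hK3 : y ⋖ j := hct ⟨y, hy⟩ ⟨j, hj.1⟩ ((hcovIn _ _).2 hcovyj)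
    have hle : c ⊔ y ≤ j := sup_le hj.2.1 hj.2.2.1
    have heq2 : c ⊔ y = j := by
      apply eq_of_le_of_height_eq hle
      rw [gK _ _ hK2, gK _ _ hK3]
    rw [heq2]; exact hj.1
  have htopn : (Order.height (⊤ : K)).toNat = n := by rw [hn]; simp
  have main : ∀ d : ℕ, ∀ x ∈ s, ∀ y ∈ s,
      n ≤ (Order.height (x ⊓ y)).toNat + d → x ⊔ y ∈ s := by
    intro d
    induction d using Nat.strong_induction_on with
    | _ d ih =>
    intro x hx y hy hd
    by_cases hxy : x ≤ y
    · rw [sup_eq_right.mpr hxy]; exact hy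
    · have hltx : x ⊓ y < x := inf_lt_left.mpr hxy
      obtain ⟨c, -, hmin⟩ := exists_minimal_le_of_wellFoundedLT
        (P := fun z => z ∈ s ∧ x ⊓ y < z ∧ z ≤ x) (a := x) ⟨hx, hltx, le_refl x⟩
      obtain ⟨⟨hcs, hc1, hc2⟩, hmin2⟩ := hmin
      have hcov : CovIn s (x ⊓ y) c := by
        refine ⟨hc1, fun z hz hcon => ?_⟩
        have := hmin2 ⟨hz, hcon.1, hcon.2.le.trans hc2⟩ hcon.2.le
        exact hcon.2.not_ge this
      have hcy : c ⊓ y = x ⊓ y := by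
        apply le_antisymm
        · exact inf_le_inf_right y hc2
        · exact le_inf hc1.le inf_le_right
      have hy' : c ⊔ y ∈ s := hbase c hcs y hy (by rw [hcy]; exact hcov)
      have hm1 : (Order.height (x ⊓ y)).toNat < (Order.height (x ⊓ (c ⊔ y))).toNat := by
        apply toNat_height_lt
        exact lt_of_lt_of_le hc1 (le_inf hc2 le_sup_left)
      have hm2 : (Order.height (x ⊓ y)).toNat < n := by
        have := toNat_height_lt (lt_of_lt_of_le hltx le_top : x ⊓ y < ⊤)
        omega
      have hres := ih (d - 1) (by omega) x hx (c ⊔ y) hy' (by omega)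
      have hsup : x ⊔ (c ⊔ y) = x ⊔ y := by
        rw [← sup_assoc, sup_eq_left.mpr hc2]
      rwa [hsup] at hres
  intro x hx y hy
  exact main n x hx y hy (by omega)
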